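/- Let J be the symmetric 5×5 Jacobian of the star-cycle network with M = 5, J_{ik} = Σ_{j=1}^{5} β_j φ_{ij} φ_{kj} − γ·δ_{ik}. Assume 0 < β0 < γ (so R0 = β0/γ < 1) and γ/β0 < ζ < 1 + 5(1−R0)/R0. If φ0 ∈ (0, 1/4] and |φ0 − 1/5| < φ̃5, then every eigenvalue of J is negative; if φ0 ∈ (0, 1/4] and |φ0 − 1/5| > φ̃5, then J has a positive eigenvalue. -/

import Mathlib

open Matrix

set_option maxHeartbeats 1000000

/-- Flux matrix of the star-cycle network with `M = 5`. -/
noncomputable def scFlux5 (φ0 : ℝ) : Matrix (Fin 5) (Fin 5) ℝ :=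
  !![1 - 3*φ0, φ0, 0, φ0, φ0;
     φ0, 1 - 3*φ0, φ0, 0, φ0;
     0, φ0, 1 - 3*φ0, φ0, φ0;
     φ0, 0, φ0, 1 - 3*φ0, φ0;
     φ0, φ0, φ0, φ0, 1 - 4*φ0]

/-- Infection rates: `β₁ = … = β₄ = β0`, `β₅ = ζ·β0`. -/
noncomputable def scBeta5 (β0 ζ : ℝ) : Fin 5 → ℝ := ![β0, β0, β0, β0, ζ * β0]

/-- Jacobian of the infected subsystem at the disease-free equilibrium:
`J_{ik} = Σ_j β_j φ_{ij} φ_{kj} − γ·δ_{ik}`. -/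
noncomputable def scJac5 (β0 ζ γ φ0 : ℝ) : Matrix (Fin 5) (Fin 5) ℝ :=
  Matrix.of fun i k =>
    (∑ j, scBeta5 β0 ζ j * scFlux5 φ0 i j * scFlux5 φ0 k j)
      - γ * (if i = k then 1 else 0)

lemma sc_det5 (d1 o1 o2 h d5 μ : ℝ) :
    (!![μ-d1, -o1, -o2, -o1, -h;
        -o1, μ-d1, -o1, -o2, -h;
        -o2, -o1, μ-d1, -o1, -h;
        -o1, -o2, -o1, μ-d1, -h;
        -h, -h, -h, -h, μ-d5] : Matrix (Fin 5) (Fin 5) ℝ).det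
    = (μ - (d1-o2))^2 * (μ - (d1-2*o1+o2)) *
      (μ^2 - (d1+2*o1+o2+d5)*μ + ((d1+2*o1+o2)*d5 - 4*h^2)) := by
  simp [det_succ_row_zero, Fin.sum_univ_succ, Fin.succAbove]
  ring

set_option maxHeartbeats 2000000 in
lemma sc_jac_eq (β0 ζ γ p μ : ℝ) :
    μ • (1 : Matrix (Fin 5) (Fin 5) ℝ) - scJac5 β0 ζ γ p =
    (!![μ-(β0*((1-3*p)^2+2*p^2)+ζ*β0*p^2-γ), -(2*β0*(1-3*p)*p+ζ*β0*p^2), -(2*β0*p^2+ζ*β0*p^2), -(2*β0*(1-3*p)*p+ζ*β0*p^2), -(β0*p*(1-p)+ζ*β0*p*(1-4*p));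
        -(2*β0*(1-3*p)*p+ζ*β0*p^2), μ-(β0*((1-3*p)^2+2*p^2)+ζ*β0*p^2-γ), -(2*β0*(1-3*p)*p+ζ*β0*p^2), -(2*β0*p^2+ζ*β0*p^2), -(β0*p*(1-p)+ζ*β0*p*(1-4*p));
        -(2*β0*p^2+ζ*β0*p^2), -(2*β0*(1-3*p)*p+ζ*β0*p^2), μ-(β0*((1-3*p)^2+2*p^2)+ζ*β0*p^2-γ), -(2*β0*(1-3*p)*p+ζ*β0*p^2), -(β0*p*(1-p)+ζ*β0*p*(1-4*p));
        -(2*β0*(1-3*p)*p+ζ*β0*p^2), -(2*β0*p^2+ζ*β0*p^2), -(2*β0*(1-3*p)*p+ζ*β0*p^2), μ-(β0*((1-3*p)^2+2*p^2)+ζ*β0*p^2-γ), -(β0*p*(1-p)+ζ*β0*p*(1-4*p));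
        -(β0*p*(1-p)+ζ*β0*p*(1-4*p)), -(β0*p*(1-p)+ζ*β0*p*(1-4*p)), -(β0*p*(1-p)+ζ*β0*p*(1-4*p)), -(β0*p*(1-p)+ζ*β0*p*(1-4*p)), μ-(4*β0*p^2+ζ*β0*(1-4*p)^2-γ)] : Matrix (Fin 5) (Fin 5) ℝ) := by
  ext i k
  fin_cases i <;> fin_cases k <;>
    simp [scJac5, scFlux5, scBeta5, Fin.sum_univ_five, Matrix.one_apply,
      Matrix.vecHead, Matrix.vecTail] <;> ring

lemma sc_jac_det (β0 ζ γ p μ : ℝ) :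
    (μ • (1 : Matrix (Fin 5) (Fin 5) ℝ) - scJac5 β0 ζ γ p).det =
    (μ - (β0*(1-3*p)^2 - γ))^2 * (μ - (β0*(1-5*p)^2 - γ)) *
      (μ^2 - ((β0*(1-p)^2+4*ζ*β0*p^2-γ) + (4*β0*p^2+ζ*β0*(1-4*p)^2-γ))*μ
        + ((β0*(1-p)^2+4*ζ*β0*p^2-γ)*(4*β0*p^2+ζ*β0*(1-4*p)^2-γ)
            - 4*(β0*p*(1-p)+ζ*β0*p*(1-4*p))^2)) := by
  rw [sc_jac_eq, sc_det5]; ring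

lemma sc_spec_iff (A : Matrix (Fin 5) (Fin 5) ℝ) (μ : ℝ) :
    μ ∈ spectrum ℝ A ↔ (μ • (1 : Matrix (Fin 5) (Fin 5) ℝ) - A).det = 0 := by
  rw [spectrum.mem_iff, Algebra.algebraMap_eq_smul_one, Matrix.isUnit_iff_isUnit_det,
    isUnit_iff_ne_zero, not_not]

lemma sc_no_pos (β0 γ ζ p : ℝ) (hβ0 : 0 < β0) (hβγ : β0 < γ) (hζ1 : γ < ζ*β0)
    (hN : β0*(ζ-1) < 5*(γ-β0)) (hp : 0 < p) (hp4 : p ≤ 1/4)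
    (h1 : γ ≤ β0*((1-p)^2 + 4*ζ*p^2)) (h2 : γ ≤ β0*(4*p^2 + ζ*(1-4*p)^2)) : False := by
  have hζgt1 : 1 < ζ := by nlinarith
  have B1 : 0 < β0*(5*(1-p)^2+20*ζ*p^2-ζ-4) := by nlinarith
  have B2 : 0 < β0*(20*p^2+5*ζ*(1-4*p)^2-ζ-4) := by nlinarith
  have hA1 : 0 < 5*(1-p)^2+20*ζ*p^2-ζ-4 := by
    by_contra hcon; push_neg at hcon
    nlinarith [mul_nonneg hβ0.le (neg_nonneg.mpr hcon)]
  have hA2 : 0 < 20*p^2+5*ζ*(1-4*p)^2-ζ-4 := by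
    by_contra hcon; push_neg at hcon
    nlinarith [mul_nonneg hβ0.le (neg_nonneg.mpr hcon)]
  nlinarith [hA1, mul_pos (show (0:ℝ) < 1/4+5*p/2 by linarith) hA2,
    mul_nonneg (mul_nonneg (show (0:ℝ) ≤ ζ-1 by linarith) (sq_nonneg p))
      (show (0:ℝ) ≤ 3-10*p by linarith),
    mul_pos (mul_pos hp (show (0:ℝ) < 2-5*p by linarith))
      (show (0:ℝ) < 2+10*p by linarith)]

/-- Given the subcritical flux bound, both diagonal entries of the symmetric
2×2 block are negative. -/
lemma sc_SD_neg (β0 γ ζ p : ℝ) (hβ0 : 0 < β0) (hβγ : β0 < γ) (hζ1 : γ < ζ*β0)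
    (hN : β0*(ζ-1) < 5*(γ-β0)) (hp : 0 < p) (hp4 : p ≤ 1/4)
    (hΔ : 0 < (β0*(1-p)^2+4*ζ*β0*p^2-γ)*(4*β0*p^2+ζ*β0*(1-4*p)^2-γ)
            - 4*(β0*p*(1-p)+ζ*β0*p*(1-4*p))^2) :
    β0*(1-p)^2+4*ζ*β0*p^2-γ < 0 ∧ 4*β0*p^2+ζ*β0*(1-4*p)^2-γ < 0 := by
  set S := β0*(1-p)^2+4*ζ*β0*p^2-γ with hSdef
  set D := 4*β0*p^2+ζ*β0*(1-4*p)^2-γ with hDdef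
  set H := β0*p*(1-p)+ζ*β0*p*(1-4*p) with hHdef
  have hS : S < 0 := by
    by_contra hcon; push_neg at hcon
    have hD0 : 0 ≤ D := by
      by_contra hcon2; push_neg at hcon2
      nlinarith [mul_nonneg hcon (neg_nonneg.mpr hcon2.le), sq_nonneg H]
    refine sc_no_pos β0 γ ζ p hβ0 hβγ hζ1 hN hp hp4 ?_ ?_
    · rw [hSdef] at hcon; nlinarith [hcon]
    · rw [hDdef] at hD0; nlinarith [hD0]
  refine ⟨hS, ?_⟩
  by_contra hcon; push_neg at hcon
  nlinarith [mul_nonneg (neg_nonneg.mpr hS.le) hcon, sq_nonneg H]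

lemma sc_E1_neg (β0 γ p : ℝ) (hβ0 : 0 < β0) (hβγ : β0 < γ) (hp : 0 < p) (hp4 : p ≤ 1/4) :
    β0*(1-3*p)^2 - γ < 0 := by
  nlinarith [mul_pos hβ0 (mul_pos hp (show (0:ℝ) < 6-9*p by linarith))]

lemma sc_E2_neg (β0 γ p : ℝ) (hβ0 : 0 < β0) (hβγ : β0 < γ) (hp : 0 < p) (hp4 : p ≤ 1/4) :
    β0*(1-5*p)^2 - γ < 0 := by
  nlinarith [mul_pos hβ0 (mul_pos hp (show (0:ℝ) < 10-25*p by linarith))]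

lemma sc_quad_root_neg (T Δ μ : ℝ) (hT : T < 0) (hΔ : 0 < Δ)
    (h : μ^2 - T*μ + Δ = 0) : μ < 0 := by
  by_contra hcon; push_neg at hcon
  nlinarith [sq_nonneg μ, mul_nonneg (by linarith : (0:ℝ) ≤ -T) hcon]

lemma sc_quad_root_pos (T Δ : ℝ) (hΔ : Δ < 0) :
    ∃ μ : ℝ, 0 < μ ∧ μ^2 - T*μ + Δ = 0 := by
  have hdisc : 0 ≤ T^2 - 4*Δ := by nlinarith [sq_nonneg T]
  set R := Real.sqrt (T^2 - 4*Δ) with hRdef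
  have hR2 : R^2 = T^2 - 4*Δ := Real.sq_sqrt hdisc
  have hRnn : 0 ≤ R := Real.sqrt_nonneg _
  refine ⟨(T + R)/2, ?_, ?_⟩
  · by_contra hcon; push_neg at hcon
    have hRT : R ≤ -T := by linarith
    have := mul_self_le_mul_self hRnn hRT
    nlinarith
  · have e : ((T + R)/2)^2 - T*((T + R)/2) + Δ = (R^2 - (T^2 - 4*Δ))/4 := by ring
    rw [e, hR2]; ring

/-- The 2×2-block determinant identity in the deviation variable `p - 1/5`. -/
lemma sc_delta_id (β0 γ ζ p : ℝ) :
    (β0*(1-p)^2+4*ζ*β0*p^2-γ)*(4*β0*p^2+ζ*β0*(1-4*p)^2-γ)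
      - 4*(β0*p*(1-p)+ζ*β0*p*(1-4*p))^2
    = (γ*(5*(γ-β0)-β0*(ζ-1)) - 25*β0*(p-1/5)^2*(5*ζ*(γ-β0)-γ*(ζ-1)))/5 := by
  ring

lemma sc_H_nonneg (β0 ζ p : ℝ) (hβ0 : 0 < β0) (hζ : 0 < ζ) (hp : 0 < p) (hp4 : p ≤ 1/4) :
    0 ≤ β0*p*(1-p)+ζ*β0*p*(1-4*p) := by
  have h1 : (0:ℝ) ≤ β0*p*(1-p) :=
    mul_nonneg (mul_nonneg hβ0.le hp.le) (by linarith)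
  have h2 : (0:ℝ) ≤ ζ*β0*p*(1-4*p) :=
    mul_nonneg (mul_nonneg (mul_nonneg hζ.le hβ0.le) hp.le) (by linarith)
  linarith

theorem starCycle5_DFE (β0 γ ζ φ0 : ℝ)
    (hβ0 : 0 < β0) (hβγ : β0 < γ)
    (hζlo : γ / β0 < ζ)
    (hζhi : ζ < 1 + 5 * (1 - β0 / γ) / (β0 / γ))
    (hφlo : 0 < φ0) (hφhi : φ0 ≤ 1 / 4) :
    (|φ0 - 1 / 5| <
        (1 / 5) * Real.sqrt ((5 * (1 - β0 / γ) - (β0 / γ) * (ζ - 1)) /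
          ((β0 / γ) * (5 * ζ * (1 - β0 / γ) - (ζ - 1)))) →
      ∀ μ ∈ spectrum ℝ (scJac5 β0 ζ γ φ0), μ < 0) ∧
    ((1 / 5) * Real.sqrt ((5 * (1 - β0 / γ) - (β0 / γ) * (ζ - 1)) /
          ((β0 / γ) * (5 * ζ * (1 - β0 / γ) - (ζ - 1)))) < |φ0 - 1 / 5| →
      ∃ μ ∈ spectrum ℝ (scJac5 β0 ζ γ φ0), 0 < μ) := by
  have hγ : 0 < γ := hβ0.trans hβγ
  have hγne : γ ≠ 0 := ne_of_gt hγ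
  have hζ1 : γ < ζ * β0 := by
    rw [div_lt_iff₀ hβ0] at hζlo; linarith
  have hζpos : 0 < ζ := lt_trans (div_pos hγ hβ0) hζlo
  have hr : 0 < β0/γ := div_pos hβ0 hγ
  have h1' : (ζ-1) * (β0/γ) < 5*(1-β0/γ) := by
    have h : ζ - 1 < 5*(1-β0/γ)/(β0/γ) := by linarith
    exact (lt_div_iff₀ hr).mp h
  have hN : β0*(ζ-1) < 5*(γ-β0) := by
    have h2' := mul_lt_mul_of_pos_right h1' hγ
    have e1 : (ζ-1)*(β0/γ)*γ = β0*(ζ-1) := by field_simp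
    have e2 : 5*(1-β0/γ)*γ = 5*(γ-β0) := by field_simp
    rw [e1, e2] at h2'; exact h2'
  have hDn : 0 < 5*ζ*(γ-β0) - γ*(ζ-1) := by
    have hprod : 0 < (γ - β0) * (ζ*β0 - γ) :=
      mul_pos (sub_pos.mpr hβγ) (sub_pos.mpr hζ1)
    have hmul : γ*(β0*(ζ-1)) < γ*(5*(γ-β0)) := mul_lt_mul_of_pos_left hN hγ
    by_contra hcon; push_neg at hcon
    nlinarith [mul_nonneg hβ0.le (neg_nonneg.mpr hcon)]
  have hN' : 0 < 5*(γ-β0) - β0*(ζ-1) := by linarith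
  have hA : (5 * (1 - β0 / γ) - (β0 / γ) * (ζ - 1)) = (5*(γ-β0) - β0*(ζ-1))/γ := by
    field_simp
  have hB : ((β0 / γ) * (5 * ζ * (1 - β0 / γ) - (ζ - 1)))
      = (β0*(5*ζ*(γ-β0) - γ*(ζ-1)))/γ^2 := by
    field_simp
  have hApos : 0 < (5 * (1 - β0 / γ) - (β0 / γ) * (ζ - 1)) := by rw [hA]; positivity
  have hBpos : 0 < ((β0 / γ) * (5 * ζ * (1 - β0 / γ) - (ζ - 1))) := by rw [hB]; positivity
  set A := (5 * (1 - β0 / γ) - (β0 / γ) * (ζ - 1)) with hAdef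
  set B := ((β0 / γ) * (5 * ζ * (1 - β0 / γ) - (ζ - 1))) with hBdef
  have hBne : B ≠ 0 := ne_of_gt hBpos
  set p := φ0 with hpdef
  constructor
  · -- subcritical branch
    intro hlt μ hμ
    have hsq : (p-1/5)^2 * B < A/25 := by
      have h0 := mul_self_lt_mul_self (abs_nonneg (p-1/5)) hlt
      rw [abs_mul_abs_self] at h0
      have hs : (1/5*Real.sqrt (A/B))*(1/5*Real.sqrt (A/B)) = 1/25*(A/B) := by
        rw [mul_mul_mul_comm, Real.mul_self_sqrt (by positivity)]; ring
      rw [hs, ← pow_two] at h0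
      have h2 := mul_lt_mul_of_pos_right h0 hBpos
      have e : 1/25*(A/B)*B = A/25 := by field_simp
      rw [e] at h2; exact h2
    have hpoly : 25*β0*(p-1/5)^2*(5*ζ*(γ-β0)-γ*(ζ-1)) < γ*(5*(γ-β0)-β0*(ζ-1)) := by
      rw [hA, hB] at hsq
      have h5 := mul_lt_mul_of_pos_right hsq (show (0:ℝ) < γ^2 by positivity)
      have e1 : (p-1/5)^2*((β0*(5*ζ*(γ-β0)-γ*(ζ-1)))/γ^2)*γ^2
          = (p-1/5)^2*(β0*(5*ζ*(γ-β0)-γ*(ζ-1))) := by field_simp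
      have e2 : ((5*(γ-β0)-β0*(ζ-1))/γ/25)*γ^2 = γ*(5*(γ-β0)-β0*(ζ-1))/25 := by
        field_simp
      rw [e1, e2] at h5
      have h6 : 25*((p-1/5)^2*(β0*(5*ζ*(γ-β0)-γ*(ζ-1)))) < γ*(5*(γ-β0)-β0*(ζ-1)) := by
        linarith
      calc 25*β0*(p-1/5)^2*(5*ζ*(γ-β0)-γ*(ζ-1))
          = 25*((p-1/5)^2*(β0*(5*ζ*(γ-β0)-γ*(ζ-1)))) := by ring
        _ < γ*(5*(γ-β0)-β0*(ζ-1)) := h6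
    have hΔpos : 0 < (β0*(1-p)^2+4*ζ*β0*p^2-γ)*(4*β0*p^2+ζ*β0*(1-4*p)^2-γ)
        - 4*(β0*p*(1-p)+ζ*β0*p*(1-4*p))^2 := by
      rw [sc_delta_id]; linarith
    obtain ⟨hSneg, hDneg⟩ := sc_SD_neg β0 γ ζ p hβ0 hβγ hζ1 hN hφlo hφhi hΔpos
    rw [sc_spec_iff, sc_jac_det] at hμ
    rcases mul_eq_zero.mp hμ with h12 | hq
    · rcases mul_eq_zero.mp h12 with h1 | h2
      · have h1' : μ - (β0*(1-3*p)^2 - γ) = 0 :=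
          pow_eq_zero_iff (n := 2) (by norm_num) |>.mp h1
        have he := sc_E1_neg β0 γ p hβ0 hβγ hφlo hφhi
        linarith
      · have he := sc_E2_neg β0 γ p hβ0 hβγ hφlo hφhi
        linarith
    · exact sc_quad_root_neg _ _ μ (by linarith) hΔpos hq
  · -- supercritical branch
    intro hgt
    have hsq : A/25 < (p-1/5)^2 * B := by
      have h0 := mul_self_lt_mul_self (by positivity) hgt
      rw [abs_mul_abs_self] at h0
      have hs : (1/5*Real.sqrt (A/B))*(1/5*Real.sqrt (A/B)) = 1/25*(A/B) := by
        rw [mul_mul_mul_comm, Real.mul_self_sqrt (by positivity)]; ring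
      rw [hs, ← pow_two] at h0
      have h2 := mul_lt_mul_of_pos_right h0 hBpos
      have e : 1/25*(A/B)*B = A/25 := by field_simp
      rw [e] at h2; exact h2
    have hpoly : γ*(5*(γ-β0)-β0*(ζ-1)) < 25*β0*(p-1/5)^2*(5*ζ*(γ-β0)-γ*(ζ-1)) := by
      rw [hA, hB] at hsq
      have h5 := mul_lt_mul_of_pos_right hsq (show (0:ℝ) < γ^2 by positivity)
      have e1 : (p-1/5)^2*((β0*(5*ζ*(γ-β0)-γ*(ζ-1)))/γ^2)*γ^2
          = (p-1/5)^2*(β0*(5*ζ*(γ-β0)-γ*(ζ-1))) := by field_simp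
      have e2 : ((5*(γ-β0)-β0*(ζ-1))/γ/25)*γ^2 = γ*(5*(γ-β0)-β0*(ζ-1))/25 := by
        field_simp
      rw [e1, e2] at h5
      have h6 : γ*(5*(γ-β0)-β0*(ζ-1)) < 25*((p-1/5)^2*(β0*(5*ζ*(γ-β0)-γ*(ζ-1)))) := by
        linarith
      calc γ*(5*(γ-β0)-β0*(ζ-1))
          < 25*((p-1/5)^2*(β0*(5*ζ*(γ-β0)-γ*(ζ-1)))) := h6
        _ = 25*β0*(p-1/5)^2*(5*ζ*(γ-β0)-γ*(ζ-1)) := by ring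
    have hΔneg : (β0*(1-p)^2+4*ζ*β0*p^2-γ)*(4*β0*p^2+ζ*β0*(1-4*p)^2-γ)
        - 4*(β0*p*(1-p)+ζ*β0*p*(1-4*p))^2 < 0 := by
      rw [sc_delta_id]; linarith
    obtain ⟨μ, hμpos, hμroot⟩ :=
      sc_quad_root_pos ((β0*(1-p)^2+4*ζ*β0*p^2-γ) + (4*β0*p^2+ζ*β0*(1-4*p)^2-γ))
        ((β0*(1-p)^2+4*ζ*β0*p^2-γ)*(4*β0*p^2+ζ*β0*(1-4*p)^2-γ)
          - 4*(β0*p*(1-p)+ζ*β0*p*(1-4*p))^2) hΔneg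
    refine ⟨μ, ?_, hμpos⟩
    rw [sc_spec_iff, sc_jac_det, hμroot]
    ring
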